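/- Let x be a solution of the delayed consensus equation on [t₀,∞). Then the function λ(t) = min_{i∈[1:n]} inf_{s∈[t−h̄,t]} x_i(s) is non-decreasing on [t₀,∞). -/

import Mathlib

open MeasureTheory Set Filter intervalIntegral

noncomputable section

/-- Standing assumptions on the weight functions: measurable,
`0 ≤ a i j t ≤ ā` on `[0,∞)` and `a i i ≡ 0`. -/
def GoodWeights (n : ℕ) (abar : ℝ) (a : Fin n → Fin n → ℝ → ℝ) : Prop :=
  (∀ i j, Measurable (a i j)) ∧
  (∀ i j, ∀ t : ℝ, 0 ≤ t → 0 ≤ a i j t ∧ a i j t ≤ abar) ∧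
  (∀ i, ∀ t : ℝ, 0 ≤ t → a i i t = 0)

/-- Standing assumptions on the delay functions: measurable,
`0 ≤ h i j t ≤ h̄` on `[0,∞)` and `h i i ≡ 0`. -/
def GoodDelays (n : ℕ) (hbar : ℝ) (h : Fin n → Fin n → ℝ → ℝ) : Prop :=
  (∀ i j, Measurable (h i j)) ∧
  (∀ i j, ∀ t : ℝ, 0 ≤ t → 0 ≤ h i j t ∧ h i j t ≤ hbar) ∧
  (∀ i, ∀ t : ℝ, 0 ≤ t → h i i t = 0)

/-- `x` is bounded on every compact subset of `[t₀ - h̄, ∞)`. -/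
def LocBounded (n : ℕ) (t0 hbar : ℝ) (x : ℝ → Fin n → ℝ) : Prop :=
  ∀ T : ℝ, ∃ C : ℝ, ∀ i : Fin n, ∀ s ∈ Icc (t0 - hbar) T, |x s i| ≤ C

/-- `x` is a solution of the delayed consensus differential *inequality* on `[t₀,∞)`:
it is locally bounded on `[t₀ - h̄, ∞)`, absolutely continuous on `[t₀,∞)` with a.e.
derivative `D` (encoded via the integral representation with locally integrable `D`),
and `D` satisfies the consensus inequality almost everywhere on `[t₀,∞)`. -/
def IsSolIneq (n : ℕ) (a h : Fin n → Fin n → ℝ → ℝ) (hbar t0 : ℝ)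
    (x D : ℝ → Fin n → ℝ) : Prop :=
  LocBounded n t0 hbar x ∧
  (∀ i : Fin n, ∀ T : ℝ, IntegrableOn (fun s => D s i) (Icc t0 T)) ∧
  (∀ i : Fin n, ∀ t : ℝ, t0 ≤ t → x t i = x t0 i + ∫ s in t0..t, D s i) ∧
  (∀ᵐ t : ℝ ∂volume, t0 ≤ t → ∀ i : Fin n,
    D t i ≤ ∑ j : Fin n, a i j t * (x (t - h i j t) j - x t i))

/-- `x` is a solution of the delayed consensus *equation* on `[t₀,∞)`. -/
def IsSolEq (n : ℕ) (a h : Fin n → Fin n → ℝ → ℝ) (hbar t0 : ℝ)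
    (x D : ℝ → Fin n → ℝ) : Prop :=
  LocBounded n t0 hbar x ∧
  (∀ i : Fin n, ∀ T : ℝ, IntegrableOn (fun s => D s i) (Icc t0 T)) ∧
  (∀ i : Fin n, ∀ t : ℝ, t0 ≤ t → x t i = x t0 i + ∫ s in t0..t, D s i) ∧
  (∀ᵐ t : ℝ ∂volume, t0 ≤ t → ∀ i : Fin n,
    D t i = ∑ j : Fin n, a i j t * (x (t - h i j t) j - x t i))

/-- `Λ(t) = max_i sup_{s ∈ [t-h̄, t]} x_i(s)`. -/
def Lam (n : ℕ) (hbar : ℝ) (x : ℝ → Fin n → ℝ) (t : ℝ) : ℝ :=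
  ⨆ i : Fin n, sSup ((fun s => x s i) '' Icc (t - hbar) t)

/-- `λ(t) = min_i inf_{s ∈ [t-h̄, t]} x_i(s)`. -/
def lam (n : ℕ) (hbar : ℝ) (x : ℝ → Fin n → ℝ) (t : ℝ) : ℝ :=
  ⨅ i : Fin n, sInf ((fun s => x s i) '' Icc (t - hbar) t)

/-- Non-instantaneous type-symmetry of the weight matrix with sequence `tp` and
constant `K` (Definition 1). -/
def NonInstTypeSymm (n : ℕ) (a : Fin n → Fin n → ℝ → ℝ) (tp : ℕ → ℝ) (K : ℝ) : Prop :=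
  tp 0 = 0 ∧ StrictMono tp ∧ Tendsto tp atTop atTop ∧ 1 ≤ K ∧
  ∀ p : ℕ, ∀ i j : Fin n,
    K⁻¹ * ∫ t in tp p..tp (p + 1), a j i t ≤ (∫ t in tp p..tp (p + 1), a i j t) ∧
    (∫ t in tp p..tp (p + 1), a i j t) ≤ K * ∫ t in tp p..tp (p + 1), a j i t

/-- The persistent graph `G_∞`, whose arcs are the pairs `(j,i)` with
`∫_0^∞ a_{ij} = ∞` (i.e. `a i j` is not integrable on `[0,∞)`), is connected:
the symmetric reflexive-transitive closure of the arc relation relates any two nodes. -/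
def PersGraphConnected (n : ℕ) (a : Fin n → Fin n → ℝ → ℝ) : Prop :=
  ∀ u v : Fin n, Relation.ReflTransGen
    (fun p q => ¬ IntegrableOn (a q p) (Ici 0) ∨ ¬ IntegrableOn (a p q) (Ici 0)) u v

/-- The weight matrix is repeatedly strongly connected with sequence `tp` and
constant `ε` (Definition 2): on each `[t_p, t_{p+1}]`, the graph whose arcs `(j,i)`
satisfy `∫_{t_p}^{t_{p+1}} a_{ij} ≥ ε` is strongly connected. -/
def RepeatedlyStronglyConnected (n : ℕ) (a : Fin n → Fin n → ℝ → ℝ)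
    (tp : ℕ → ℝ) (ε : ℝ) : Prop :=
  tp 0 = 0 ∧ StrictMono tp ∧ Tendsto tp atTop atTop ∧ 0 < ε ∧
  ∀ p : ℕ, ∀ u v : Fin n, Relation.ReflTransGen
    (fun i j => ε ≤ ∫ t in tp p..tp (p + 1), a j i t) u v

/-- The quantity `M = sup_{i,j,p} ∫_{t_p}^{t_{p+1}} a_{ij}` is finite, bounded by `M`. -/
def MBound (n : ℕ) (a : Fin n → Fin n → ℝ → ℝ) (tp : ℕ → ℝ) (M : ℝ) : Prop :=
  ∀ p : ℕ, ∀ i j : Fin n, (∫ t in tp p..tp (p + 1), a i j t) ≤ M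

end

set_option maxHeartbeats 1000000 in
lemma key_invariance {n : ℕ} {abar hbar : ℝ} (habar : 0 ≤ abar) (hhbar : 0 ≤ hbar)
    {a h : Fin n → Fin n → ℝ → ℝ} (ha : GoodWeights n abar a) (hh : GoodDelays n hbar h)
    {t0 : ℝ} (ht0 : 0 ≤ t0) {x D : ℝ → Fin n → ℝ}
    (hDint : ∀ i : Fin n, ∀ T : ℝ, IntegrableOn (fun s => D s i) (Icc t0 T))
    (hrep : ∀ i : Fin n, ∀ t : ℝ, t0 ≤ t → x t i = x t0 i + ∫ s in t0..t, D s i)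
    (hode : ∀ᵐ t : ℝ ∂volume, t0 ≤ t → ∀ i : Fin n,
      D t i = ∑ j : Fin n, a i j t * (x (t - h i j t) j - x t i))
    {t1 : ℝ} (ht1 : t0 ≤ t1) {c : ℝ}
    (hc : ∀ i : Fin n, ∀ s ∈ Icc (t1 - hbar) t1, c ≤ x s i) :
    ∀ t, t1 ≤ t → ∀ i, c ≤ x t i := by
  -- interval integrability of D
  have hII : ∀ (i : Fin n) (s t : ℝ), t0 ≤ s → t0 ≤ t →
      IntervalIntegrable (fun u => D u i) volume s t := by
    intro i s t hs ht
    refine ((hDint i (max s t)).mono_set ?_).intervalIntegrable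
    exact uIcc_subset_Icc ⟨hs, le_max_left _ _⟩ ⟨ht, le_max_right _ _⟩
  -- continuity of coordinates on [t0, T]
  have hcont : ∀ (i : Fin n) (T : ℝ), ContinuousOn (fun t => x t i) (Icc t0 T) := by
    intro i T
    rcases le_or_gt t0 T with hT | hT
    · have h1 : ContinuousOn (fun t => x t0 i + ∫ s in t0..t, D s i) (Icc t0 T) := by
        refine continuousOn_const.add ?_
        have := intervalIntegral.continuousOn_primitive_interval (μ := volume)
          (f := fun s => D s i) (a := t0) (b := T) (by rw [uIcc_of_le hT]; exact hDint i T)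
        rwa [uIcc_of_le hT] at this
      exact h1.congr fun t htmem => hrep i t htmem.1
    · rw [Icc_eq_empty (not_le.2 hT)]; exact continuousOn_empty _
  -- the ε-barrier estimate
  have main : ∀ ε : ℝ, 0 < ε → ∀ t', t1 ≤ t' → ∀ i, c - ε * Real.exp (t' - t1) ≤ x t' i := by
    intro ε hε
    by_contra hcon
    push_neg at hcon
    obtain ⟨ts, hts, istar, hlt⟩ := hcon
    set b : ℝ → ℝ := fun u => c - ε * Real.exp (u - t1) with hbdef
    have hbcont : Continuous b := by fun_prop
    have hbmono : ∀ u v : ℝ, u ≤ v → b v ≤ b u := by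
      intro u v huv
      have h1 : Real.exp (u - t1) ≤ Real.exp (v - t1) := Real.exp_le_exp.2 (by linarith)
      simp only [hbdef]
      nlinarith
    have hblt : ∀ u : ℝ, b u < c := by
      intro u
      have h1 := Real.exp_pos (u - t1)
      simp only [hbdef]
      nlinarith
    set S : Set ℝ := {u | u ∈ Icc t1 ts ∧ ∃ j, x u j ≤ b u} with hSdef
    have hSsub : ∀ T : ℝ, Icc t1 T ⊆ Icc t0 T := fun T => Icc_subset_Icc_left ht1
    have hSne : S.Nonempty := ⟨ts, ⟨hts, le_rfl⟩, istar, hlt.le⟩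
    have hSclosed : IsClosed S := by
      have hrw : S = ⋃ j : Fin n, (Icc t1 ts ∩ (fun u => x u j - b u) ⁻¹' Iic 0) := by
        ext u
        simp only [hSdef, mem_setOf_eq, mem_iUnion, mem_inter_iff, mem_preimage, mem_Iic,
          sub_nonpos]
        tauto
      rw [hrw]
      refine isClosed_iUnion_of_finite fun j => ?_
      exact ContinuousOn.preimage_isClosed_of_isClosed
        (((hcont j ts).mono (hSsub ts)).sub hbcont.continuousOn) isClosed_Icc isClosed_Iic
    have hSbdd : BddBelow S := ⟨t1, fun v hv => hv.1.1⟩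
    set τ := sInf S with hτdef
    have hτS : τ ∈ S := hSclosed.csInf_mem hSne hSbdd
    obtain ⟨⟨hτ1, hτ2⟩, i, hxi⟩ := hτS
    have ht1τ : t1 < τ := by
      rcases lt_or_eq_of_le hτ1 with h' | h'
      · exact h'
      · exfalso
        have h1 : c ≤ x τ i := hc i τ ⟨by linarith, h'.ge⟩
        have h2 := hblt τ
        linarith
    have hP : ∀ u, t1 ≤ u → u < τ → ∀ j, b u < x u j := by
      intro u hu1 hu2 j
      by_contra hle
      push_neg at hle
      have hmem : u ∈ S := ⟨⟨hu1, hu2.le.trans hτ2⟩, j, hle⟩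
      exact absurd (csInf_le hSbdd hmem) (not_le.2 hu2)
    set K : ℝ := (n : ℝ) * abar with hKdef
    have hK : 0 ≤ K := by positivity
    set δ : ℝ := 1 / (2 * (K + 1)) with hδdef
    have hδ : 0 < δ := by positivity
    set s0 : ℝ := max t1 (τ - δ) with hs0def
    have hs0l : t1 ≤ s0 := le_max_left _ _
    have hs0τ : s0 < τ := max_lt ht1τ (by linarith)
    have hs0d : τ - s0 ≤ δ := by
      have := le_max_right t1 (τ - δ)
      linarith
    set g : ℝ → ℝ := fun u => x u i - b u with hgdef
    have hgcont : ContinuousOn g (Icc t1 ts) :=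
      ((hcont i ts).mono (hSsub ts)).sub hbcont.continuousOn
    have hsub : Icc s0 τ ⊆ Icc t1 ts := Icc_subset_Icc hs0l hτ2
    obtain ⟨us, husmem, husmax⟩ :=
      isCompact_Icc.exists_isMaxOn ⟨τ, hs0τ.le, le_rfl⟩ (hgcont.mono hsub)
    have hmax : ∀ u ∈ Icc s0 τ, g u ≤ g us := fun u hu => husmax hu
    -- the key integral inequality
    have KI : ∀ s, t1 ≤ s → s ≤ τ →
        g s - K * (∫ u in s..τ, g u) + ε * Real.exp (s - t1) * (τ - s) ≤ g τ := by
      intro s hs hsτ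
      have hts0 : t0 ≤ s := ht1.trans hs
      have htτ0 : t0 ≤ τ := ht1.trans hτ1
      -- x τ i - x s i = ∫ s..τ D
      have hxdiff : x τ i - x s i = ∫ u in s..τ, D u i := by
        rw [hrep i τ htτ0, hrep i s hts0]
        have := intervalIntegral.integral_interval_sub_left
          (hII i t0 τ le_rfl htτ0) (hII i t0 s le_rfl hts0)
        linarith [this]
      -- a.e. lower bound for D on (s, τ)
      have hae : (fun u => -K * g u) ≤ᵐ[volume.restrict (Icc s τ)] fun u => D u i := by
        have h1 : ∀ᵐ u ∂(volume.restrict (Icc s τ)), t0 ≤ u → ∀ j : Fin n,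
            D u j = ∑ k : Fin n, a j k u * (x (u - h j k u) k - x u j) :=
          ae_restrict_of_ae hode
        have h2 : ∀ᵐ u ∂(volume.restrict (Icc s τ)), u ∈ Icc s τ :=
          ae_restrict_mem measurableSet_Icc
        have h3 : ∀ᵐ u ∂(volume.restrict (Icc s τ)), u ≠ τ := by
          refine ae_restrict_of_ae ?_
          have hv : volume ({τ} : Set ℝ) = 0 := Real.volume_singleton
          filter_upwards [measure_eq_zero_iff_ae_notMem.mp hv] with u hu
          simpa using hu
        filter_upwards [h1, h2, h3] with u hu1 hu2 hu3
        have hu1' : t1 ≤ u := hs.trans hu2.1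
        have huτ : u < τ := lt_of_le_of_ne hu2.2 hu3
        have hu0 : 0 ≤ u := le_trans (ht0.trans ht1) hu1'
        have hgu : 0 ≤ g u := by
          have := hP u hu1' huτ i
          simp only [hgdef]; linarith
        rw [hu1 (ht1.trans hu1')]
        have hterm : ∀ j : Fin n, -(abar * g u) ≤ a i j u * (x (u - h i j u) j - x u i) := by
          intro j
          obtain ⟨haij0, haijb⟩ := ha.2.1 i j u hu0
          obtain ⟨hhij0, hhijb⟩ := hh.2.1 i j u hu0
          have hdel : b u ≤ x (u - h i j u) j := by
            rcases le_or_gt t1 (u - h i j u) with hv | hv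
            · have hvτ : u - h i j u < τ := lt_of_le_of_lt (by linarith) huτ
              have h4 := hP (u - h i j u) hv hvτ j
              have h5 := hbmono (u - h i j u) u (by linarith)
              linarith
            · have hvm : u - h i j u ∈ Icc (t1 - hbar) t1 := ⟨by linarith, hv.le⟩
              have h4 := hc j (u - h i j u) hvm
              have h5 := hblt u
              linarith
          have h4 : a i j u * (b u - x u i) ≤ a i j u * (x (u - h i j u) j - x u i) :=
            mul_le_mul_of_nonneg_left (by linarith) haij0
          have h5 : -(abar * g u) ≤ a i j u * (b u - x u i) := by
            have h6 : a i j u * g u ≤ abar * g u := mul_le_mul_of_nonneg_right haijb hgu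
            simp only [hgdef] at h6 ⊢
            nlinarith
          linarith
        calc -K * g u = (n : ℝ) * (-(abar * g u)) := by rw [hKdef]; ring
          _ = ∑ _j : Fin n, -(abar * g u) := by
              rw [Finset.sum_const, Finset.card_univ, Fintype.card_fin, nsmul_eq_mul]
          _ ≤ ∑ j : Fin n, a i j u * (x (u - h i j u) j - x u i) :=
              Finset.sum_le_sum fun j _ => hterm j
      have hgint : IntervalIntegrable (fun u => -K * g u) volume s τ := by
        refine ContinuousOn.intervalIntegrable ?_
        rw [uIcc_of_le hsτ]
        exact continuousOn_const.mul (hgcont.mono (Icc_subset_Icc hs hτ2))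
      have hint := intervalIntegral.integral_mono_ae_restrict hsτ hgint (hII i s τ hts0 htτ0) hae
      rw [intervalIntegral.integral_const_mul] at hint
      -- bound on b τ - b s
      have hbb : b τ - b s ≤ -(ε * Real.exp (s - t1) * (τ - s)) := by
        have e1 : Real.exp (τ - t1) = Real.exp (s - t1) * Real.exp (τ - s) := by
          rw [← Real.exp_add]; ring_nf
        have e2 : (τ - s) + 1 ≤ Real.exp (τ - s) := by
          have := Real.add_one_le_exp (τ - s); linarith
        have e3 : (0:ℝ) < Real.exp (s - t1) := Real.exp_pos _
        have e5 : ε * Real.exp (s - t1) * (τ - s) ≤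
            ε * Real.exp (τ - t1) - ε * Real.exp (s - t1) := by
          have h6 : ε * Real.exp (s - t1) * (τ - s) ≤
              ε * Real.exp (s - t1) * (Real.exp (τ - s) - 1) :=
            mul_le_mul_of_nonneg_left (by linarith) (by positivity)
          calc ε * Real.exp (s - t1) * (τ - s)
              ≤ ε * Real.exp (s - t1) * (Real.exp (τ - s) - 1) := h6
            _ = ε * (Real.exp (s - t1) * Real.exp (τ - s)) - ε * Real.exp (s - t1) := by ring
            _ = ε * Real.exp (τ - t1) - ε * Real.exp (s - t1) := by rw [← e1]
        simp only [hbdef]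
        linarith
      have heq : g τ - g s = (x τ i - x s i) - (b τ - b s) := by simp only [hgdef]; ring
      rw [hxdiff] at heq
      linarith
    -- final contradiction
    have hgτ : g τ ≤ 0 := by simp only [hgdef]; linarith
    have hgs0 : 0 < g s0 := by
      have := hP s0 hs0l hs0τ i
      simp only [hgdef]; linarith
    rcases eq_or_lt_of_le (husmem.2 : us ≤ τ) with husτ | husτ
    · have := hmax s0 ⟨le_rfl, hs0τ.le⟩
      rw [husτ] at this
      linarith
    · have hust1 : t1 ≤ us := hs0l.trans husmem.1
      have h1 := KI us hust1 husmem.2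
      have h2 : (∫ u in us..τ, g u) ≤ (τ - us) * g us := by
        have hle : ∀ u ∈ Icc us τ, g u ≤ g us := fun u hu =>
          hmax u ⟨husmem.1.trans hu.1, hu.2⟩
        have h3 := intervalIntegral.integral_mono_on (μ := volume)
          (f := g) (g := fun _ => g us) husmem.2
          (ContinuousOn.intervalIntegrable (by
            rw [uIcc_of_le husmem.2]
            exact hgcont.mono (Icc_subset_Icc hust1 hτ2)))
          intervalIntegrable_const hle
        rwa [intervalIntegral.integral_const, smul_eq_mul] at h3
      have hτus : τ - us ≤ δ := by
        have := husmem.1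
        linarith
      have hgus : 0 ≤ g us := le_of_lt (lt_of_lt_of_le hgs0 (hmax s0 ⟨le_rfl, hs0τ.le⟩))
      have hKδ : K * (τ - us) ≤ 1 / 2 := by
        have h5 : K * (τ - us) ≤ K * δ := mul_le_mul_of_nonneg_left hτus hK
        have h6 : K * δ ≤ 1 / 2 := by
          rw [hδdef, mul_one_div, div_le_iff₀ (by positivity)]
          nlinarith
        linarith
      have hεe : 0 < ε * Real.exp (us - t1) * (τ - us) := by
        have h7 := Real.exp_pos (us - t1)
        have h8 : (0:ℝ) < τ - us := by linarith
        positivity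
      have hK2 : -(K * ((τ - us) * g us)) ≤ -(K * ∫ u in us..τ, g u) := by
        have := mul_le_mul_of_nonneg_left h2 hK
        linarith
      have h7 : 0 ≤ g us * (1 - K * (τ - us)) := mul_nonneg hgus (by linarith)
      nlinarith [h1, hK2, h7, hεe, hgτ]
  intro t ht i
  by_contra hcx
  push_neg at hcx
  have hE : 0 < Real.exp (t - t1) := Real.exp_pos _
  have hεpos : 0 < (c - x t i) / (2 * Real.exp (t - t1)) := by
    have : 0 < c - x t i := by linarith
    positivity
  have hm := main _ hεpos t ht i
  have hmul : (c - x t i) / (2 * Real.exp (t - t1)) * Real.exp (t - t1) = (c - x t i) / 2 := by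
    field_simp
  rw [hmul] at hm
  linarith

theorem stmt1 (n : ℕ) (hn : 1 ≤ n) (abar hbar : ℝ) (habar : 0 ≤ abar) (hhbar : 0 ≤ hbar)
    (a h : Fin n → Fin n → ℝ → ℝ)
    (ha : GoodWeights n abar a) (hh : GoodDelays n hbar h)
    (t0 : ℝ) (ht0 : 0 ≤ t0) (x D : ℝ → Fin n → ℝ)
    (hx : IsSolEq n a h hbar t0 x D) :
    MonotoneOn (lam n hbar x) (Ici t0) := by
  haveI : Nonempty (Fin n) := ⟨⟨0, hn⟩⟩
  obtain ⟨hbd, hDint, hrep, hode⟩ := hx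
  intro t1 ht1 t2 ht2 h12
  simp only [mem_Ici] at ht1 ht2
  set c := lam n hbar x t1 with hcdef
  -- lower bound on [t1 - hbar, t1]
  have hbdd : ∀ (t : ℝ), t0 ≤ t → ∀ i : Fin n,
      BddBelow ((fun s => x s i) '' Icc (t - hbar) t) := by
    intro t ht i
    obtain ⟨C, hC⟩ := hbd t
    refine ⟨-C, ?_⟩
    rintro y ⟨s, hs, rfl⟩
    have hs' : s ∈ Icc (t0 - hbar) t := ⟨by linarith [hs.1], hs.2⟩
    have := hC i s hs'
    have := abs_le.mp this
    linarith [this.1]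
  have hne : ∀ (t : ℝ), ∀ i : Fin n,
      ((fun s => x s i) '' Icc (t - hbar) t).Nonempty :=
    fun t i => Nonempty.image _ ⟨t, by constructor <;> linarith⟩
  have hc1 : ∀ i : Fin n, ∀ s ∈ Icc (t1 - hbar) t1, c ≤ x s i := by
    intro i s hs
    have h1 : c ≤ sInf ((fun s => x s i) '' Icc (t1 - hbar) t1) := by
      rw [hcdef]
      exact ciInf_le (Finite.bddBelow_range _) i
    have h2 : sInf ((fun s => x s i) '' Icc (t1 - hbar) t1) ≤ x s i :=
      csInf_le (hbdd t1 ht1 i) ⟨s, hs, rfl⟩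
    linarith
  have key := key_invariance habar hhbar ha hh ht0 hDint hrep hode ht1 hc1
  -- conclude
  rw [hcdef] at *
  show lam n hbar x t1 ≤ lam n hbar x t2
  refine le_ciInf fun i => ?_
  refine le_csInf (hne t2 i) ?_
  rintro y ⟨s, hs, rfl⟩
  rcases le_or_gt t1 s with hcase | hcase
  · exact key s hcase i
  · exact hc1 i s ⟨by linarith [hs.1], hcase.le⟩
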